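/- At zero momentum (p = q = 0), the absolute BRST cohomology of Ab(0,0) is: H^1 is two-dimensional, spanned by the classes of A_0^0 and A_0^1; H^2 is two-dimensional, spanned by the classes of B_0 and C_0; and H^g(Ab(0,0)) = 0 for every integer g ∉ {1,2}. Thus, unlike the relative zero-momentum cohomology, the absolute zero-momentum cohomology in the (−1,0) picture is nonzero only at ghost numbers one and two. -/

import Mathlib

/-!
Massless relative BRST complex of the N=2 string in the (−1,0) picture.

Basis: for each N ≥ 0, `A N 0`, `A N 1` in degree 2N+1 and `B N`, `C N` in
degree 2N+2.  Momenta `p q : Fin 2 → ℂ` correspond to (p⁰,p¹) and (q₀,q₁).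
The BRST differential acts by
  Q A_N^0 = 2p⁰ B_N − q₁ C_N,
  Q A_N^1 = 2p¹ B_N + q₀ C_N,
  Q B_N   = q₀ A_{N+1}^0 + q₁ A_{N+1}^1,
  Q C_N   = 2p⁰ A_{N+1}^1 − 2p¹ A_{N+1}^0.
-/

/-- Basis of the relative complex `R(p,q)`. -/
inductive RB where
  | A : ℕ → Fin 2 → RB
  | B : ℕ → RB
  | C : ℕ → RB

/-- The underlying vector space of the complex `R(p,q)`: formal ℂ-linear
combinations of basis vectors. -/
abbrev RSpace : Type := RB →₀ ℂ

/-- The ghost-number degree of a basis vector. -/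
def RB.deg : RB → ℤ
  | .A N _ => 2 * (N : ℤ) + 1
  | .B N => 2 * (N : ℤ) + 2
  | .C N => 2 * (N : ℤ) + 2

/-- The degree-`g` graded piece `R^g` (the span of the basis vectors of
degree `g`); it is `0` for `g ≤ 0`. -/
noncomputable def Rdeg (g : ℤ) : Submodule ℂ RSpace :=
  Finsupp.supported ℂ ℂ {b : RB | RB.deg b = g}

open Finsupp in
/-- The BRST differential `Q` of `R(p,q)`. -/
noncomputable def Qmap (p q : Fin 2 → ℂ) : RSpace →ₗ[ℂ] RSpace :=
  Finsupp.lift RSpace ℂ RB fun b => match b with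
    | .A N μ =>
        (2 * p μ) • single (RB.B N) (1 : ℂ)
          + (if μ = 0 then -(q 1) else q 0) • single (RB.C N) (1 : ℂ)
    | .B N =>
        q 0 • single (RB.A (N + 1) 0) (1 : ℂ)
          + q 1 • single (RB.A (N + 1) 1) (1 : ℂ)
    | .C N =>
        (2 * p 0) • single (RB.A (N + 1) 1) (1 : ℂ)
          - (2 * p 1) • single (RB.A (N + 1) 0) (1 : ℂ)

/-- The state `q·A_N = q₀ A_N^0 + q₁ A_N^1`. -/
noncomputable def qA (q : Fin 2 → ℂ) (N : ℕ) : RSpace :=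
  q 0 • Finsupp.single (RB.A N 0) (1 : ℂ) + q 1 • Finsupp.single (RB.A N 1) (1 : ℂ)

/-- Degree-`g` cocycles: `ker Q ∩ R^g`. -/
noncomputable def Zg (p q : Fin 2 → ℂ) (g : ℤ) : Submodule ℂ RSpace :=
  Rdeg g ⊓ LinearMap.ker (Qmap p q)

/-- Degree-`g` coboundaries: `Q(R^{g-1})`. -/
noncomputable def Bg (p q : Fin 2 → ℂ) (g : ℤ) : Submodule ℂ RSpace :=
  (Rdeg (g - 1)).map (Qmap p q)

/-- The relative BRST cohomology `H^g(R(p,q)) = (ker Q ∩ R^g)/Q(R^{g-1})`,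
realised as the image of the cocycles `Z^g` in the quotient of the whole space
by the coboundaries `B^g = Q(R^{g-1})`. -/
noncomputable def Hco (p q : Fin 2 → ℂ) (g : ℤ) :
    Submodule ℂ (RSpace ⧸ Bg p q g) :=
  (Zg p q g).map (Bg p q g).mkQ
/-!
The absolute complex `Ab(p,q) := R ⊕ c₀R`.  An element is a pair `(x, y)`
representing `x + c₀ y` with `x, y ∈ R`.  The degree-`g` part is
`R^g ⊕ c₀ R^{g-1}`.  The shift operator `S` has degree `+2` and sends each
basis vector at level `N` to the corresponding one at level `N+1`, and the
differential is extended by `Q(c₀ y) = −4 S y − c₀ (Q y)`.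
-/

/-- The level shift `N ↦ N + 1` on basis vectors. -/
def RB.shift : RB → RB
  | .A N μ => .A (N + 1) μ
  | .B N => .B (N + 1)
  | .C N => .C (N + 1)

/-- The degree `+2` map `S` with `S A_N^μ = A_{N+1}^μ`, `S B_N = B_{N+1}`,
`S C_N = C_{N+1}`. -/
noncomputable def Smap : RSpace →ₗ[ℂ] RSpace :=
  Finsupp.lmapDomain ℂ ℂ RB.shift

/-- The underlying space of the absolute complex `Ab(p,q) = R ⊕ c₀R`:
the pair `(x, y)` represents `x + c₀ y`. -/
abbrev AbSpace : Type := RSpace × RSpace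

/-- The degree-`g` graded piece `Ab^g = R^g ⊕ c₀ R^{g-1}`. -/
noncomputable def AbDeg (g : ℤ) : Submodule ℂ AbSpace :=
  (Rdeg g).prod (Rdeg (g - 1))

/-- The BRST differential on the absolute complex:
`Q (x + c₀ y) = (Q x − 4 S y) − c₀ (Q y)`. -/
noncomputable def QAb (p q : Fin 2 → ℂ) : AbSpace →ₗ[ℂ] AbSpace :=
  LinearMap.prod
    ((Qmap p q) ∘ₗ (LinearMap.fst ℂ RSpace RSpace)
      - (4 : ℂ) • (Smap ∘ₗ (LinearMap.snd ℂ RSpace RSpace)))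
    (- ((Qmap p q) ∘ₗ (LinearMap.snd ℂ RSpace RSpace)))

/-- Degree-`g` cocycles of the absolute complex. -/
noncomputable def AbZ (p q : Fin 2 → ℂ) (g : ℤ) : Submodule ℂ AbSpace :=
  AbDeg g ⊓ LinearMap.ker (QAb p q)

/-- Degree-`g` coboundaries of the absolute complex: `Q(Ab^{g-1})`. -/
noncomputable def AbB (p q : Fin 2 → ℂ) (g : ℤ) : Submodule ℂ AbSpace :=
  (AbDeg (g - 1)).map (QAb p q)

/-- The absolute BRST cohomology
`H^g(Ab(p,q)) = (ker Q ∩ Ab^g)/Q(Ab^{g-1})`, realised as the image of the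
cocycles in the quotient by the coboundaries. -/
noncomputable def HAb (p q : Fin 2 → ℂ) (g : ℤ) :
    Submodule ℂ (AbSpace ⧸ AbB p q g) :=
  (AbZ p q g).map (AbB p q g).mkQ

/-! ### Auxiliary lemmas for the zero-momentum absolute cohomology -/

open Finsupp Submodule

lemma RB.one_le_deg (b : RB) : 1 ≤ b.deg := by
  cases b <;> simp [RB.deg] <;> omega

lemma Rdeg_eq_bot {g : ℤ} (hg : g ≤ 0) : Rdeg g = ⊥ := by
  have : {b : RB | RB.deg b = g} = ∅ := by
    ext b; simp only [Set.mem_setOf_eq, Set.mem_empty_iff_false, iff_false]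
    intro h; have := RB.one_le_deg b; omega
  rw [Rdeg, this, Finsupp.supported_empty]

lemma RB.shift_injective : Function.Injective RB.shift := by
  intro a b h
  cases a <;> cases b <;> simp [RB.shift] at h <;> simp_all

lemma Smap_injective : Function.Injective Smap := by
  have : ⇑Smap = Finsupp.mapDomain RB.shift := rfl
  rw [this]
  exact Finsupp.mapDomain_injective RB.shift_injective

lemma Qmap_zero : Qmap 0 0 = 0 := by
  apply Finsupp.lhom_ext
  intro a c
  rw [Qmap, Finsupp.lift_apply, Finsupp.sum_single_index (by simp)]
  cases a with
  | A N μ => simp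
  | B N => simp
  | C N => simp

lemma QAb_zero_apply (x y : RSpace) :
    QAb 0 0 (x, y) = (-((4 : ℂ) • Smap y), 0) := by
  simp [QAb, Qmap_zero]

lemma AbZ_zero (g : ℤ) : AbZ 0 0 g = (Rdeg g).prod ⊥ := by
  ext ⟨x, y⟩
  simp only [AbZ, AbDeg, Submodule.mem_inf, Submodule.mem_prod, LinearMap.mem_ker,
    Submodule.mem_bot]
  constructor
  · rintro ⟨⟨hx, hy⟩, hk⟩
    refine ⟨hx, ?_⟩
    rw [QAb_zero_apply] at hk
    have h4 : ((4 : ℂ) • Smap y) = 0 := by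
      have := congrArg Prod.fst hk
      simpa using this
    have : Smap y = 0 := by
      have := congrArg (fun z => (4 : ℂ)⁻¹ • z) h4
      simpa [smul_smul] using this
    have := Smap_injective (a₁ := y) (a₂ := 0) (by simpa using this)
    exact this
  · rintro ⟨hx, rfl⟩
    exact ⟨⟨hx, Submodule.zero_mem _⟩, by rw [QAb_zero_apply]; simp⟩

lemma QAb_zero_eq :
    QAb 0 0
      = (LinearMap.inl ℂ RSpace RSpace ∘ₗ ((-4 : ℂ) • Smap))
          ∘ₗ LinearMap.snd ℂ RSpace RSpace := by
  apply LinearMap.ext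
  rintro ⟨x, y⟩
  rw [QAb_zero_apply]
  simp

lemma map_neg_four_smul (p : Submodule ℂ RSpace) :
    p.map ((-4 : ℂ) • Smap) = p.map Smap := by
  ext x
  simp only [Submodule.mem_map, LinearMap.smul_apply]
  constructor
  · rintro ⟨y, hy, rfl⟩
    exact ⟨(-4 : ℂ) • y, p.smul_mem _ hy, map_smul Smap _ _⟩
  · rintro ⟨y, hy, rfl⟩
    refine ⟨(-4 : ℂ)⁻¹ • y, p.smul_mem _ hy, ?_⟩
    rw [map_smul, smul_smul]
    norm_num

lemma AbB_zero (g : ℤ) :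
    AbB 0 0 g = ((Rdeg (g - 2)).map Smap).map (LinearMap.inl ℂ RSpace RSpace) := by
  rw [AbB, QAb_zero_eq, AbDeg, Submodule.map_comp, Submodule.prod_map_snd,
    Submodule.map_comp, map_neg_four_smul]
  congr 3
  ring

lemma set_deg_one : {b : RB | RB.deg b = 1} = {RB.A 0 0, RB.A 0 1} := by
  ext b
  cases b with
  | A N μ =>
      simp only [Set.mem_setOf_eq, RB.deg, Set.mem_insert_iff, Set.mem_singleton_iff]
      constructor
      · intro h
        have hN : N = 0 := by omega
        subst hN
        fin_cases μ
        · exact Or.inl rfl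
        · exact Or.inr rfl
      · rintro (h | h) <;> (cases h; simp)
  | B N =>
      simp only [Set.mem_setOf_eq, RB.deg, Set.mem_insert_iff, Set.mem_singleton_iff]
      constructor
      · intro h; omega
      · rintro (h | h) <;> cases h
  | C N =>
      simp only [Set.mem_setOf_eq, RB.deg, Set.mem_insert_iff, Set.mem_singleton_iff]
      constructor
      · intro h; omega
      · rintro (h | h) <;> cases h

lemma set_deg_two : {b : RB | RB.deg b = 2} = {RB.B 0, RB.C 0} := by
  ext b
  cases b with
  | A N μ =>
      simp only [Set.mem_setOf_eq, RB.deg, Set.mem_insert_iff, Set.mem_singleton_iff]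
      constructor
      · intro h; omega
      · rintro (h | h) <;> cases h
  | B N =>
      simp only [Set.mem_setOf_eq, RB.deg, Set.mem_insert_iff, Set.mem_singleton_iff]
      constructor
      · intro h
        have hN : N = 0 := by omega
        subst hN; simp
      · rintro (h | h) <;> cases h <;> norm_num
  | C N =>
      simp only [Set.mem_setOf_eq, RB.deg, Set.mem_insert_iff, Set.mem_singleton_iff]
      constructor
      · intro h
        have hN : N = 0 := by omega
        subst hN; simp
      · rintro (h | h) <;> cases h <;> norm_num

lemma Rdeg_span {g : ℤ} {b0 b1 : RB} (h : {b : RB | RB.deg b = g} = {b0, b1}) :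
    Rdeg g = Submodule.span ℂ
      {Finsupp.single b0 (1 : ℂ), Finsupp.single b1 (1 : ℂ)} := by
  rw [Rdeg, h, Finsupp.supported_eq_span_single]
  congr 1
  simp [Set.image_insert_eq]

lemma Smap_single (b : RB) :
    Smap (Finsupp.single b (1 : ℂ)) = Finsupp.single b.shift (1 : ℂ) := by
  simp [Smap, Finsupp.mapDomain_single]

lemma RB.deg_shift (b : RB) : b.shift.deg = b.deg + 2 := by
  cases b <;> simp [RB.deg, RB.shift] <;> push_cast <;> ring

lemma shift_image {g : ℤ} (hg : 3 ≤ g) :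
    RB.shift '' {b : RB | RB.deg b = g - 2} = {b : RB | RB.deg b = g} := by
  ext b
  simp only [Set.mem_image, Set.mem_setOf_eq]
  constructor
  · rintro ⟨a, ha, rfl⟩
    rw [RB.deg_shift]; omega
  · intro hb
    cases b with
    | A N μ =>
        simp only [RB.deg] at hb
        have hN : 1 ≤ N := by omega
        refine ⟨RB.A (N - 1) μ, ?_, ?_⟩
        · simp only [RB.deg]; push_cast; omega
        · simp [RB.shift]; omega
    | B N =>
        simp only [RB.deg] at hb
        have hN : 1 ≤ N := by omega
        refine ⟨RB.B (N - 1), ?_, ?_⟩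
        · simp only [RB.deg]; push_cast; omega
        · simp [RB.shift]; omega
    | C N =>
        simp only [RB.deg] at hb
        have hN : 1 ≤ N := by omega
        refine ⟨RB.C (N - 1), ?_, ?_⟩
        · simp only [RB.deg]; push_cast; omega
        · simp [RB.shift]; omega

lemma map_Smap_Rdeg {g : ℤ} (hg : 3 ≤ g) : (Rdeg (g - 2)).map Smap = Rdeg g := by
  rw [Rdeg, Rdeg, Finsupp.supported_eq_span_single, Finsupp.supported_eq_span_single,
    Submodule.map_span, ← shift_image hg, ← Set.image_comp, ← Set.image_comp]
  exact congrArg _ (Set.image_congr' (fun b => Smap_single b))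

lemma HAb_eq_bot {g : ℤ} (hg : g ∉ ({1, 2} : Set ℤ)) : HAb 0 0 g = ⊥ := by
  rw [HAb, eq_bot_iff]
  have hle : AbZ 0 0 g ≤ AbB 0 0 g := by
    rcases le_or_gt g 0 with h0 | h0
    · rw [AbZ_zero, Rdeg_eq_bot h0]
      rintro ⟨x, y⟩ hxy
      rw [Submodule.mem_prod] at hxy
      obtain ⟨hx, hy⟩ := hxy
      rw [Submodule.mem_bot] at hx hy
      subst hx; subst hy
      exact Submodule.zero_mem _
    · have h3 : 3 ≤ g := by
        simp only [Set.mem_insert_iff, Set.mem_singleton_iff, not_or] at hg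
        omega
      rw [AbZ_zero, AbB_zero, map_Smap_Rdeg h3, ← Submodule.map_inl]
  calc Submodule.map (AbB 0 0 g).mkQ (AbZ 0 0 g)
      ≤ Submodule.map (AbB 0 0 g).mkQ (AbB 0 0 g) := Submodule.map_mono hle
    _ ≤ ⊥ := by
        rw [Submodule.map_le_iff_le_comap, Submodule.comap_bot, Submodule.ker_mkQ]

lemma AbB_bot {g : ℤ} (hg : g - 2 ≤ 0) : AbB 0 0 g = ⊥ := by
  rw [AbB_zero, Rdeg_eq_bot hg, Submodule.map_bot, Submodule.map_bot]

lemma AbZ_span {g : ℤ} {b0 b1 : RB} (h : {b : RB | RB.deg b = g} = {b0, b1}) :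
    AbZ 0 0 g = Submodule.span ℂ
      {((Finsupp.single b0 (1 : ℂ), 0) : AbSpace), (Finsupp.single b1 (1 : ℂ), 0)} := by
  rw [AbZ_zero, Rdeg_span h, ← Submodule.map_inl, Submodule.map_span]
  congr 1
  simp [Set.image_insert_eq]

lemma HAb_span {g : ℤ} {b0 b1 : RB} (h : {b : RB | RB.deg b = g} = {b0, b1}) :
    HAb 0 0 g = Submodule.span ℂ
      {(AbB 0 0 g).mkQ ((Finsupp.single b0 (1 : ℂ), 0) : AbSpace),
       (AbB 0 0 g).mkQ ((Finsupp.single b1 (1 : ℂ), 0) : AbSpace)} := by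
  rw [HAb, AbZ_span h, Submodule.map_span]
  congr 1
  simp [Set.image_insert_eq]

lemma linind_mkQ {g : ℤ} (hB : AbB 0 0 g = ⊥) {b0 b1 : RB} (hne : b0 ≠ b1) :
    LinearIndependent ℂ
      ![(AbB 0 0 g).mkQ ((Finsupp.single b0 (1 : ℂ), 0) : AbSpace),
        (AbB 0 0 g).mkQ ((Finsupp.single b1 (1 : ℂ), 0) : AbSpace)] := by
  have hf : Function.Injective ![b0, b1] := by
    intro i j hij
    fin_cases i <;> fin_cases j <;> simp_all <;> exact absurd hij.symm hne
  have h1 : LinearIndependent ℂ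
      (fun i : Fin 2 => Finsupp.single (![b0, b1] i) (1 : ℂ)) := by
    have := (Finsupp.basisSingleOne (R := ℂ) (ι := RB)).linearIndependent.comp
      ![b0, b1] hf
    simpa [Function.comp_def] using this
  have h2 := (h1.map' (LinearMap.inl ℂ RSpace RSpace) Submodule.ker_inl).map'
    ((AbB 0 0 g).mkQ) (by rw [Submodule.ker_mkQ, hB])
  convert h2 using 1
  funext i
  fin_cases i <;> rfl
  all_goals rfl

lemma pair_eq_range {V : Type*} (v0 v1 : V) :
    ({v0, v1} : Set V) = Set.range ![v0, v1] := by
  ext x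
  constructor
  · rintro (rfl | rfl)
    exacts [⟨0, rfl⟩, ⟨1, rfl⟩]
  · rintro ⟨i, rfl⟩
    fin_cases i
    · exact Or.inl rfl
    · exact Or.inr rfl

lemma finrank_span_pair_eq_two {V : Type*} [AddCommGroup V] [Module ℂ V]
    {v0 v1 : V} (hli : LinearIndependent ℂ ![v0, v1]) :
    Module.finrank ℂ ↥(Submodule.span ℂ {v0, v1}) = 2 := by
  rw [pair_eq_range, finrank_span_eq_card hli]
  simp

lemma span_pair_top {V : Type*} [AddCommGroup V] [Module ℂ V]
    {P : Submodule ℂ V} {v0 v1 : V}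
    (hP : P = Submodule.span ℂ {v0, v1}) (h0 : v0 ∈ P) (h1 : v1 ∈ P) :
    Submodule.span ℂ {(⟨v0, h0⟩ : ↥P), ⟨v1, h1⟩} = ⊤ := by
  apply Submodule.map_injective_of_injective P.injective_subtype
  rw [Submodule.map_span, Submodule.map_top, Submodule.range_subtype]
  have himg : (⇑P.subtype '' {(⟨v0, h0⟩ : ↥P), ⟨v1, h1⟩} : Set V) = {v0, v1} := by
    simp [Set.image_insert_eq]
  rw [himg, ← hP]
/-- At zero momentum (`p = q = 0`), the absolute BRST
cohomology of `Ab(0,0)` is: `H^1` is two-dimensional, spanned by the classes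
of `A_0^0` and `A_0^1`; `H^2` is two-dimensional, spanned by the classes of
`B_0` and `C_0`; and `H^g(Ab(0,0)) = 0` for every integer `g ∉ {1, 2}`.
Thus, unlike the relative zero-momentum cohomology, the absolute zero-momentum
cohomology in the (−1,0) picture is nonzero only at ghost numbers one and
two. -/
theorem zero_momentum_absolute_cohomology
    (hm1 : (AbB 0 0 1).mkQ ((Finsupp.single (RB.A 0 0) (1 : ℂ), 0) : AbSpace)
      ∈ HAb 0 0 1)
    (hm2 : (AbB 0 0 1).mkQ ((Finsupp.single (RB.A 0 1) (1 : ℂ), 0) : AbSpace)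
      ∈ HAb 0 0 1)
    (hm3 : (AbB 0 0 2).mkQ ((Finsupp.single (RB.B 0) (1 : ℂ), 0) : AbSpace)
      ∈ HAb 0 0 2)
    (hm4 : (AbB 0 0 2).mkQ ((Finsupp.single (RB.C 0) (1 : ℂ), 0) : AbSpace)
      ∈ HAb 0 0 2) :
    (Module.finrank ℂ ↥(HAb 0 0 1) = 2
      ∧ Submodule.span ℂ
          {(⟨(AbB 0 0 1).mkQ ((Finsupp.single (RB.A 0 0) (1 : ℂ), 0) : AbSpace),
              hm1⟩ : ↥(HAb 0 0 1)),
           (⟨(AbB 0 0 1).mkQ ((Finsupp.single (RB.A 0 1) (1 : ℂ), 0) : AbSpace),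
              hm2⟩ : ↥(HAb 0 0 1))} = ⊤)
    ∧ (Module.finrank ℂ ↥(HAb 0 0 2) = 2
      ∧ Submodule.span ℂ
          {(⟨(AbB 0 0 2).mkQ ((Finsupp.single (RB.B 0) (1 : ℂ), 0) : AbSpace),
              hm3⟩ : ↥(HAb 0 0 2)),
           (⟨(AbB 0 0 2).mkQ ((Finsupp.single (RB.C 0) (1 : ℂ), 0) : AbSpace),
              hm4⟩ : ↥(HAb 0 0 2))} = ⊤)
    ∧ (∀ g : ℤ, g ∉ ({1, 2} : Set ℤ) → HAb 0 0 g = ⊥) := by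
  have hB1 : AbB 0 0 1 = ⊥ := AbB_bot (by norm_num)
  have hB2 : AbB 0 0 2 = ⊥ := AbB_bot (by norm_num)
  have hne1 : RB.A 0 0 ≠ RB.A 0 1 := by simp
  have hne2 : RB.B 0 ≠ RB.C 0 := by simp
  refine ⟨⟨?_, ?_⟩, ⟨?_, ?_⟩, ?_⟩
  · rw [HAb_span set_deg_one]
    exact finrank_span_pair_eq_two (linind_mkQ hB1 hne1)
  · exact span_pair_top (HAb_span set_deg_one) hm1 hm2
  · rw [HAb_span set_deg_two]
    exact finrank_span_pair_eq_two (linind_mkQ hB2 hne2)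
  · exact span_pair_top (HAb_span set_deg_two) hm3 hm4
  · intro g hg
    exact HAb_eq_bot hg
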